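/- Let X be a locally finite metric space and (X_n) a sparse sequence. For every slowly oscillating contraction g : X → 𝔻 supported on ⋃_n X_n there exists f : ℕ → ℕ with f(n) → ∞ such that g restricted to X_n belongs to M_{n,f(n)} for every n. -/

import Mathlib

def SlowlyOscillating {X : Type*} [MetricSpace X] (f : X → ℂ) : Prop :=
  (∃ C : ℝ, ∀ x, ‖f x‖ ≤ C) ∧
  ∀ ε : ℝ, 0 < ε → ∀ R : ℝ, 0 < R → ∃ F : Set X, F.Finite ∧
    ∀ x x', x ∉ F → x' ∉ F → dist x x' ≤ R → ‖f x - f x'‖ < ε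

def Mset {X : Type*} [MetricSpace X] (Xn : Set X) (n m : ℕ) : Set (X → ℂ) :=
  {g | (∀ x, ‖g x‖ ≤ 1) ∧ (∀ x, x ∉ Xn → g x = 0) ∧
    ∀ x x', (∃ z ∈ Xn, dist x z ≤ (n : ℝ)) → (∃ z ∈ Xn, dist x' z ≤ (n : ℝ)) →
      dist x x' ≤ (m : ℝ) → ‖g x - g x'‖ ≤ 1 / (m + 1)}

/-- Every slowly oscillating contraction supported on a sparse sequence belongs to
`M_f` for some `f : ℕ → ℕ` tending to infinity. -/
theorem exists_Mset_of_slowlyOscillating {X : Type*} [MetricSpace X]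
    (hX : ∀ (x : X) (r : ℝ), (Metric.closedBall x r).Finite)
    (Xs : ℕ → Set X) (hfin : ∀ n, (Xs n).Finite)
    (hdisj : Pairwise (Function.onFun Disjoint Xs))
    (hsparse : ∀ n m : ℕ, n ≠ m → ∀ x ∈ Xs n, ∀ y ∈ Xs m, (2 * max n m : ℝ) < dist x y)
    (g : X → ℂ) (hso : SlowlyOscillating g) (hcontr : ∀ x, ‖g x‖ ≤ 1)
    (hsupp : ∀ x, g x ≠ 0 → x ∈ ⋃ n, Xs n) :
    ∃ f : ℕ → ℕ, Filter.Tendsto f Filter.atTop Filter.atTop ∧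
      ∀ n, (Xs n).indicator g ∈ Mset (Xs n) n (f n) := by
  classical
  -- The oscillation property we want for `g` itself.
  set P : ℕ → ℕ → Prop := fun n m => ∀ x x' : X,
    (∃ z ∈ Xs n, dist x z ≤ (n : ℝ)) → (∃ z ∈ Xs n, dist x' z ≤ (n : ℝ)) →
    dist x x' ≤ (m : ℝ) → ‖g x - g x'‖ ≤ 1 / ((m : ℝ) + 1) with hPdef
  -- A point can belong to the n-neighborhood of at most one `Xs n`.
  have hnbhd_unique : ∀ (p : X) (n m : ℕ), n ≠ m →
      (∃ z ∈ Xs n, dist p z ≤ (n : ℝ)) → (∃ z ∈ Xs m, dist p z ≤ (m : ℝ)) → False := by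
    rintro p n m hnm ⟨z, hz, hpz⟩ ⟨w, hw, hpw⟩
    have h := hsparse n m hnm z hz w hw
    have htri : dist z w ≤ dist z p + dist p w := dist_triangle z p w
    rw [dist_comm z p] at htri
    have hmaxn : (n : ℝ) ≤ (max n m : ℕ) := by exact_mod_cast le_max_left n m
    have hmaxm : (m : ℝ) ≤ (max n m : ℕ) := by exact_mod_cast le_max_right n m
    linarith
  -- On the n-neighborhood of `Xs n`, the indicator of `g` equals `g`.
  have hind : ∀ (n : ℕ) (x : X), (∃ z ∈ Xs n, dist x z ≤ (n : ℝ)) →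
      (Xs n).indicator g x = g x := by
    intro n x hx
    by_cases hxn : x ∈ Xs n
    · exact Set.indicator_of_mem hxn g
    · rw [Set.indicator_of_notMem hxn]
      by_contra hg
      obtain ⟨z, hz, hxz⟩ := hx
      have hmem := hsupp x (fun h => hg h.symm)
      obtain ⟨s, ⟨m, rfl⟩, hm⟩ := hmem
      have hmn : m ≠ n := fun h => hxn (h ▸ hm)
      have h := hsparse m n hmn x hm z hz
      have hmaxn : (n : ℝ) ≤ (max m n : ℕ) := by exact_mod_cast le_max_right m n
      linarith
  -- `P 0` always holds.
  have hP0 : ∀ n, P n 0 := by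
    intro n x x' _ _ hd
    have : x = x' := by
      have := dist_nonneg (x := x) (y := x')
      exact dist_le_zero.mp (by push_cast at hd; linarith)
    simp [this]
  -- Key: for each m, `P n m` holds for all large n.
  have key : ∀ m : ℕ, ∃ N : ℕ, ∀ n ≥ N, P n m := by
    intro m
    have hε : (0 : ℝ) < 1 / ((m : ℝ) + 1) := by positivity
    have hR : (0 : ℝ) < (m : ℝ) + 1 := by positivity
    obtain ⟨F, hFfin, hF⟩ := hso.2 (1 / ((m : ℝ) + 1)) hε ((m : ℝ) + 1) hR
    set S : Set ℕ := {n | ∃ p ∈ F, ∃ z ∈ Xs n, dist p z ≤ (n : ℝ)} with hS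
    have hSfin : S.Finite := by
      have : S ⊆ ⋃ p ∈ F, {n : ℕ | ∃ z ∈ Xs n, dist p z ≤ (n : ℝ)} := by
        rintro n ⟨p, hp, hz⟩
        exact Set.mem_biUnion hp hz
      refine Set.Finite.subset (Set.Finite.biUnion hFfin fun p _ => ?_) this
      refine Set.Subsingleton.finite ?_
      intro a ha b hb
      by_contra hab
      exact hnbhd_unique p a b hab ha hb
    obtain ⟨N, hNub⟩ := hSfin.bddAbove
    refine ⟨N + 1, fun n hn x x' hx hx' hd => ?_⟩
    have hnS : n ∉ S := fun h => by
      have := hNub h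
      omega
    have hxF : x ∉ F := fun h => hnS ⟨x, h, hx⟩
    have hx'F : x' ∉ F := fun h => hnS ⟨x', h, hx'⟩
    exact le_of_lt (hF x x' hxF hx'F (by linarith))
  choose N hN using key
  set f : ℕ → ℕ := fun n => Nat.findGreatest (fun m => P n m) n with hf
  have hPf : ∀ n, P n (f n) := fun n =>
    Nat.findGreatest_spec (Nat.zero_le n) (hP0 n)
  refine ⟨f, ?_, ?_⟩
  · refine Filter.tendsto_atTop.2 fun m => Filter.eventually_atTop.2
      ⟨max m (N m), fun n hn => ?_⟩
    exact Nat.le_findGreatest (le_of_max_le_left hn) (hN m n (le_of_max_le_right hn))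
  · intro n
    refine ⟨fun x => ?_, fun x hx => Set.indicator_of_notMem hx g, fun x x' hx hx' hd => ?_⟩
    · rw [Set.indicator_apply]
      split
      · exact hcontr x
      · simp
    · rw [hind n x hx, hind n x' hx']
      exact hPf n x x' hx hx' hd
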